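/- If in a permutative groupoid G every object has an inverse up to isomorphism, then the functor (g₁, g₂) ↦ (g₂, g₂⁻¹ ⊗ g₁) is a quasi-inverse to the shear functor (g, h) ↦ (g ⊗ h, g), where g₂⁻¹ denotes a chosen inverse of g₂. -/

import Mathlib

open CategoryTheory

universe v u

/-- A permutative (strict symmetric monoidal) structure on a category `C`:
a tensor product bifunctor which is strictly associative and strictly unital,
together with a symmetry natural isomorphism satisfying the symmetry and
hexagon axioms. -/
structure PermutativeStruct (C : Type u) [Category.{v} C] where
  /-- the tensor product bifunctor -/
  T : C × C ⥤ C
  /-- the unit object -/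
  e : C
  /-- strict associativity on objects -/
  assoc : ∀ X Y Z : C, T.obj (T.obj (X, Y), Z) = T.obj (X, T.obj (Y, Z))
  /-- strict associativity as an equality of functors -/
  assoc_functor :
    Functor.prod T (𝟭 C) ⋙ T = prod.associator C C C ⋙ Functor.prod (𝟭 C) T ⋙ T
  /-- strict left unitality -/
  unitl : Prod.sectR e C ⋙ T = 𝟭 C
  /-- strict right unitality -/
  unitr : Prod.sectL C e ⋙ T = 𝟭 C
  /-- the symmetry natural isomorphism -/
  braiding : T ≅ CategoryTheory.Prod.swap C C ⋙ T
  /-- the symmetry is an involution -/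
  symmetry : ∀ X Y : C,
    braiding.hom.app (X, Y) ≫ braiding.hom.app (Y, X) = 𝟙 (T.obj (X, Y))
  /-- the hexagon axiom (in strict form) -/
  hexagon : ∀ X Y Z : C,
    braiding.hom.app (T.obj (X, Y), Z) =
      eqToHom (assoc X Y Z) ≫
        T.map ((𝟙 X, braiding.hom.app (Y, Z)) :
          ((X, T.obj (Y, Z)) : C × C) ⟶ (X, T.obj (Z, Y))) ≫
        eqToHom (assoc X Z Y).symm ≫
        T.map ((braiding.hom.app (X, Z), 𝟙 Y) :
          ((T.obj (X, Z), Y) : C × C) ⟶ (T.obj (Z, X), Y)) ≫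
        eqToHom (assoc Z X Y)

/-- A strict symmetric monoidal functor between permutative categories:
it commutes with the tensor bifunctors on the nose, preserves the unit object,
and is compatible with the symmetries. -/
structure IsStrictSymMonFunctor {C : Type u} [Category.{v} C] {D : Type u} [Category.{v} D]
    (P : PermutativeStruct C) (Q : PermutativeStruct D) (F : C ⥤ D) : Prop where
  tensor : P.T ⋙ F = F.prod F ⋙ Q.T
  unit : F.obj P.e = Q.e
  braid : ∀ X Y : C,
    F.map (P.braiding.hom.app (X, Y)) =
      eqToHom (Functor.congr_obj tensor (X, Y)) ≫
        Q.braiding.hom.app (F.obj X, F.obj Y) ≫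
        eqToHom (Functor.congr_obj tensor (Y, X)).symm

variable {G : Type u} [Groupoid.{v} G]

/-- The shear functor `(g, h) ↦ (g ⊗ h, g)`. -/
def shear (P : PermutativeStruct G) : G × G ⥤ G × G :=
  P.T.prod' (CategoryTheory.Prod.fst G G)

namespace ShearAux

/-- Left tensoring by `a`. -/
def L (P : PermutativeStruct G) (a : G) : G ⥤ G := Prod.sectR a G ⋙ P.T

lemma L_comp (P : PermutativeStruct G) (a b : G) :
    L P b ⋙ L P a = L P (P.T.obj (a, b)) := by
  refine CategoryTheory.Functor.ext (h_obj := fun x => (P.assoc a b x).symm) ?_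
  intro x y f
  have h := Functor.congr_hom P.assoc_functor
    (X := ((a, b), x)) (Y := ((a, b), y)) ((𝟙 a, 𝟙 b), f)
  simp only [Functor.comp_map, Functor.prod_map, Functor.id_map, prod.associator] at h
  have hid : ((𝟙 a, 𝟙 b) : ((a, b) : G × G) ⟶ (a, b)) = 𝟙 (a, b) := rfl
  rw [hid, P.T.map_id] at h
  dsimp [L, Prod.sectR]
  rw [h]
  simp
  erw [eqToHom_trans_assoc, eqToHom_refl, Category.id_comp, eqToHom_trans, eqToHom_refl, Category.comp_id]

/-- functoriality of `L` in isomorphisms. -/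
def LIso (P : PermutativeStruct G) {a b : G} (u : a ≅ b) : L P a ≅ L P b :=
  NatIso.ofComponents (fun x => P.T.mapIso (u.prod (Iso.refl x))) (by
    intro x y f
    dsimp [L]
    erw [← P.T.map_comp, ← P.T.map_comp]
    congr 1
    exact Prod.ext (by change 𝟙 a ≫ u.hom = u.hom ≫ 𝟙 b; simp) (by change f ≫ 𝟙 y = 𝟙 x ≫ f; simp))

noncomputable def LEquiv (P : PermutativeStruct G) (inv : G → G)
    (hl : ∀ g : G, P.T.obj (g, inv g) ≅ P.e) (hr : ∀ g : G, P.T.obj (inv g, g) ≅ P.e)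
    (a : G) : G ≌ G :=
  CategoryTheory.Equivalence.mk (L P a) (L P (inv a))
    ((eqToIso P.unitl).symm ≪≫ (LIso P (hr a)).symm ≪≫ (eqToIso (L_comp P (inv a) a)).symm)
    (eqToIso (L_comp P a (inv a)) ≪≫ LIso P (hl a) ≪≫ eqToIso P.unitl)

lemma L_isEquiv (P : PermutativeStruct G) (inv : G → G)
    (hl : ∀ g : G, P.T.obj (g, inv g) ≅ P.e) (hr : ∀ g : G, P.T.obj (inv g, g) ≅ P.e)
    (a : G) : (L P a).IsEquivalence :=
  (LEquiv P inv hl hr a).isEquivalence_functor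

/-- The essential-surjectivity iso for the shear functor. -/
noncomputable def shearIso (P : PermutativeStruct G) (inv : G → G)
    (hl : ∀ g : G, P.T.obj (g, inv g) ≅ P.e) (x : G × G) :
    (shear P).obj (x.2, P.T.obj (inv x.2, x.1)) ≅ x := by
  obtain ⟨x1, x2⟩ := x
  exact Iso.prod
    (eqToIso (P.assoc x2 (inv x2) x1).symm ≪≫ P.T.mapIso ((hl x2).prod (Iso.refl x1)) ≪≫
      eqToIso (Functor.congr_obj P.unitl x1))
    (Iso.refl x2)

lemma shear_faithful (P : PermutativeStruct G) (inv : G → G)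
    (hl : ∀ g : G, P.T.obj (g, inv g) ≅ P.e) (hr : ∀ g : G, P.T.obj (inv g, g) ≅ P.e) :
    (shear P).Faithful := by
  constructor
  rintro ⟨X1, X2⟩ ⟨Y1, Y2⟩ ⟨u1, u2⟩ ⟨v1, v2⟩ h
  rw [Prod.ext_iff] at h
  obtain ⟨h1, h2⟩ := h
  dsimp [shear, Functor.prod'] at h1 h2
  subst h2
  have e1 : ∀ w : X2 ⟶ Y2, (P.T.map ((u1, w) : ((X1, X2) : G × G) ⟶ (Y1, Y2)) : _) =
      P.T.map ((u1, 𝟙 X2) : ((X1, X2) : G × G) ⟶ (Y1, X2)) ≫ (L P Y1).map w := by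
    intro w
    erw [show (L P Y1).map w = P.T.map ((𝟙 Y1, w) : ((Y1, X2) : G × G) ⟶ (Y1, Y2)) from rfl,
      ← P.T.map_comp]
    congr 1
    simp [prod_comp]
  rw [e1 u2, e1 v2] at h1
  have h3 := (cancel_epi (P.T.map ((u1, 𝟙 X2) : ((X1, X2) : G × G) ⟶ (Y1, X2)))).mp h1
  haveI := L_isEquiv P inv hl hr Y1
  exact Prod.ext rfl ((L P Y1).map_injective h3)

lemma shear_full (P : PermutativeStruct G) (inv : G → G)
    (hl : ∀ g : G, P.T.obj (g, inv g) ≅ P.e) (hr : ∀ g : G, P.T.obj (inv g, g) ≅ P.e) :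
    (shear P).Full := by
  constructor
  rintro ⟨X1, X2⟩ ⟨Y1, Y2⟩ ⟨a, b⟩
  haveI := L_isEquiv P inv hl hr Y1
  change X1 ⟶ Y1 at b
  refine ⟨(b, (L P Y1).preimage
    (CategoryTheory.inv (P.T.map ((b, 𝟙 X2) : ((X1, X2) : G × G) ⟶ (Y1, X2))) (I := IsIso.of_groupoid _) ≫ a)), ?_⟩
  dsimp [shear, Functor.prod']
  refine Prod.ext ?_ rfl
  have : (P.T.map ((b, (L P Y1).preimage
      (CategoryTheory.inv (P.T.map ((b, 𝟙 X2) : ((X1, X2) : G × G) ⟶ (Y1, X2))) (I := IsIso.of_groupoid _) ≫ a)) :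
        ((X1, X2) : G × G) ⟶ (Y1, Y2)) : _) =
      P.T.map ((b, 𝟙 X2) : ((X1, X2) : G × G) ⟶ (Y1, X2)) ≫
        (L P Y1).map ((L P Y1).preimage
          (CategoryTheory.inv (P.T.map ((b, 𝟙 X2) : ((X1, X2) : G × G) ⟶ (Y1, X2))) (I := IsIso.of_groupoid _) ≫ a)) := by
    rw [show ∀ w : X2 ⟶ Y2, (L P Y1).map w =
      P.T.map ((𝟙 Y1, w) : ((Y1, X2) : G × G) ⟶ (Y1, Y2)) from fun _ => rfl]
    erw [← P.T.map_comp]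
    congr 1
    simp [prod_comp]
  show (P.T.map _ : _) = a
  rw [this, (L P Y1).map_preimage]
  exact IsIso.hom_inv_id_assoc _ _

lemma shear_essSurj (P : PermutativeStruct G) (inv : G → G)
    (hl : ∀ g : G, P.T.obj (g, inv g) ≅ P.e) : (shear P).EssSurj := by
  constructor
  intro x
  exact ⟨(x.2, P.T.obj (inv x.2, x.1)), ⟨shearIso P inv hl x⟩⟩

end ShearAux



open ShearAux in
/-- If every object of a permutative groupoid `G` has an inverse up to
isomorphism, witnessed by a chosen assignment `inv : G → G`, then the functor
`(g₁, g₂) ↦ (g₂, g₂⁻¹ ⊗ g₁)` is a quasi-inverse of the shear functor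
`(g, h) ↦ (g ⊗ h, g)`. -/
theorem shear_quasiInverse (P : PermutativeStruct G) (inv : G → G)
    (hl : ∀ g : G, P.T.obj (g, inv g) ≅ P.e) (hr : ∀ g : G, P.T.obj (inv g, g) ≅ P.e) :
    ∃ K : G × G ⥤ G × G,
      (∀ x : G × G, K.obj x = (x.2, P.T.obj (inv x.2, x.1))) ∧
      Nonempty (shear P ⋙ K ≅ 𝟭 (G × G)) ∧ Nonempty (K ⋙ shear P ≅ 𝟭 (G × G)) := by
  haveI : (shear P).IsEquivalence :=
    { full := shear_full P inv hl hr
      faithful := shear_faithful P inv hl hr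
      essSurj := shear_essSurj P inv hl }
  let Eqv := (shear P).asEquivalence
  let o : G × G → G × G := fun x => (x.2, P.T.obj (inv x.2, x.1))
  let K : G × G ⥤ G × G :=
    Eqv.inverse.copyObj o
      (fun x => (Eqv.unitIso.app (o x) ≪≫ Eqv.inverse.mapIso (shearIso P inv hl x)).symm)
  have hK : Eqv.inverse ≅ K := Functor.isoCopyObj _ _ _
  refine ⟨K, fun x => rfl, ⟨?_⟩, ⟨?_⟩⟩
  · exact (Functor.isoWhiskerLeft (shear P) hK).symm ≪≫ Eqv.unitIso.symm
  · exact Functor.isoWhiskerRight hK.symm (shear P) ≪≫ Eqv.counitIso
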